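/- In an interchange of order n with a collection F of t flips, if distinct lanes a, b, c are pairwise equivalent under F, then in the flipped graph at least one of a, b, c is joined by a two-edge lane–ramp–lane path to at least (n - 2^{t+1} - 3)/3 other lanes. -/

import Mathlib

/-- An interchange of order `n` in a graph `G`: a linear sequence of `n` lanes, and a
ramp for each pair of lanes; each ramp is adjacent to its two lanes and non-adjacent to
every lane outside the interval between its two lanes (lane–lane and ramp–ramp edges,
and edges from a ramp to lanes strictly between its two lanes, are unconstrained). -/
structure Interchange {V : Type*} (G : SimpleGraph V) (n : ℕ) where
  lane : Fin n → V
  ramp : ∀ i j : Fin n, i < j → V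
  lane_inj : Function.Injective lane
  ramp_ne_lane : ∀ i j (h : i < j) (k : Fin n), ramp i j h ≠ lane k
  ramp_inj : ∀ i j (h : i < j) i' j' (h' : i' < j'),
    ramp i j h = ramp i' j' h' → i = i' ∧ j = j'
  adj_left : ∀ i j (h : i < j), G.Adj (ramp i j h) (lane i)
  adj_right : ∀ i j (h : i < j), G.Adj (ramp i j h) (lane j)
  not_adj : ∀ i j (h : i < j) (k : Fin n), k < i ∨ j < k → ¬ G.Adj (ramp i j h) (lane k)

/-- The graph obtained from `G` by performing a collection `F` of flips: the adjacency
of a pair of distinct vertices is toggled once for each flip containing both. -/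
def multiFlip {V : Type*} (G : SimpleGraph V) (F : Finset (Set V)) : SimpleGraph V where
  Adj u v := u ≠ v ∧ Xor' (G.Adj u v) (Odd {A : Set V | A ∈ F ∧ u ∈ A ∧ v ∈ A}.ncard)
  symm := by
    constructor
    intro u v h
    refine ⟨h.1.symm, ?_⟩
    have hset : {A : Set V | A ∈ F ∧ v ∈ A ∧ u ∈ A} = {A : Set V | A ∈ F ∧ u ∈ A ∧ v ∈ A} := by
      ext A; simp only [Set.mem_setOf_eq]; tauto
    rw [G.adj_comm v u, hset]
    exact h.2
  loopless := ⟨fun v h => h.1 rfl⟩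

/-- Two vertices are equivalent under a collection `F` of flips if each flip in `F`
contains both or neither of them. -/
def EqvUnder {V : Type*} (F : Finset (Set V)) (u v : V) : Prop :=
  ∀ A ∈ F, (u ∈ A ↔ v ∈ A)

lemma multiFlip_adj' {V : Type*} (G : SimpleGraph V) (F : Finset (Set V)) (u v : V) :
    (multiFlip G F).Adj u v ↔ u ≠ v ∧ Xor' (G.Adj u v)
      (Odd {A : Set V | A ∈ F ∧ u ∈ A ∧ v ∈ A}.ncard) := Iff.rfl

lemma key_path {V : Type*} (G : SimpleGraph V) {n : ℕ} (I : Interchange G n)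
    (F : Finset (Set V)) (x y k k' : Fin n)
    (hxy : EqvUnder F (I.lane x) (I.lane y))
    (hkk' : EqvUnder F (I.lane k) (I.lane k'))
    (hxk : x < k) (hy : y < x ∨ k < y) (hk' : k' < x ∨ k < k') :
    ∃ z w : Fin n, (z = x ∨ z = y) ∧ (w = k ∨ w = k') ∧
      ∃ (p q : Fin n) (hpq : p < q),
        (multiFlip G F).Adj (I.lane z) (I.ramp p q hpq) ∧
        (multiFlip G F).Adj (I.ramp p q hpq) (I.lane w) := by
  classical
  set r := I.ramp x k hxk with hr
  have hsetEq : ∀ ℓ ℓ' : Fin n, EqvUnder F (I.lane ℓ) (I.lane ℓ') →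
      {A : Set V | A ∈ F ∧ r ∈ A ∧ I.lane ℓ ∈ A} =
      {A : Set V | A ∈ F ∧ r ∈ A ∧ I.lane ℓ' ∈ A} := by
    intro ℓ ℓ' h
    ext A
    simp only [Set.mem_setOf_eq]
    constructor
    · rintro ⟨h1, h2, h3⟩; exact ⟨h1, h2, (h A h1).mp h3⟩
    · rintro ⟨h1, h2, h3⟩; exact ⟨h1, h2, (h A h1).mpr h3⟩
  set N : Fin n → Prop := fun ℓ => Odd {A : Set V | A ∈ F ∧ r ∈ A ∧ I.lane ℓ ∈ A}.ncard with hN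
  have adj_iff : ∀ ℓ : Fin n, ((multiFlip G F).Adj r (I.lane ℓ) ↔
      Xor' (G.Adj r (I.lane ℓ)) (N ℓ)) := by
    intro ℓ
    rw [multiFlip_adj']
    exact and_iff_right (I.ramp_ne_lane x k hxk ℓ)
  have hNy : N y ↔ N x := by rw [hN]; simp only; rw [hsetEq x y hxy]
  have hNk' : N k' ↔ N k := by rw [hN]; simp only; rw [hsetEq k k' hkk']
  have hGx : G.Adj r (I.lane x) := I.adj_left x k hxk
  have hGk : G.Adj r (I.lane k) := I.adj_right x k hxk
  have hGy : ¬ G.Adj r (I.lane y) := I.not_adj x k hxk y hy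
  have hGk'' : ¬ G.Adj r (I.lane k') := I.not_adj x k hxk k' hk'
  by_cases hP : N x
  · by_cases hQ : N k
    · refine ⟨y, k', Or.inr rfl, Or.inr rfl, x, k, hxk, ?_, ?_⟩
      · exact ((adj_iff y).mpr (Or.inr ⟨hNy.mpr hP, hGy⟩)).symm
      · exact (adj_iff k').mpr (Or.inr ⟨hNk'.mpr hQ, hGk''⟩)
    · refine ⟨y, k, Or.inr rfl, Or.inl rfl, x, k, hxk, ?_, ?_⟩
      · exact ((adj_iff y).mpr (Or.inr ⟨hNy.mpr hP, hGy⟩)).symm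
      · exact (adj_iff k).mpr (Or.inl ⟨hGk, hQ⟩)
  · by_cases hQ : N k
    · refine ⟨x, k', Or.inl rfl, Or.inr rfl, x, k, hxk, ?_, ?_⟩
      · exact ((adj_iff x).mpr (Or.inl ⟨hGx, hP⟩)).symm
      · exact (adj_iff k').mpr (Or.inr ⟨hNk'.mpr hQ, hGk''⟩)
    · refine ⟨x, k, Or.inl rfl, Or.inl rfl, x, k, hxk, ?_, ?_⟩
      · exact ((adj_iff x).mpr (Or.inl ⟨hGx, hP⟩)).symm
      · exact (adj_iff k).mpr (Or.inl ⟨hGk, hQ⟩)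

lemma exists_close_pair {n : ℕ} (a b c k1 k2 k3 : Fin n)
    (hdisj : ∀ z ∈ ({a, b, c} : Finset (Fin n)), ∀ z' ∈ ({k1, k2, k3} : Finset (Fin n)), z ≠ z') :
    ∃ x ∈ ({a, b, c} : Finset (Fin n)), ∃ w ∈ ({k1, k2, k3} : Finset (Fin n)),
      (∀ z ∈ ({a, b, c} : Finset (Fin n)), z ≠ x →
        (z : ℕ) < min (x : ℕ) (w : ℕ) ∨ max (x : ℕ) (w : ℕ) < (z : ℕ)) ∧
      (∀ z ∈ ({k1, k2, k3} : Finset (Fin n)), z ≠ w →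
        (z : ℕ) < min (x : ℕ) (w : ℕ) ∨ max (x : ℕ) (w : ℕ) < (z : ℕ)) := by
  classical
  set T : Finset (Fin n × Fin n) := ({a, b, c} : Finset (Fin n)) ×ˢ ({k1, k2, k3} : Finset (Fin n)) with hT
  have hTne : T.Nonempty := ⟨(a, k1), by simp [hT]⟩
  obtain ⟨p, hpT, hmin⟩ := T.exists_min_image
    (fun p => max (p.1 : ℕ) (p.2 : ℕ) - min (p.1 : ℕ) (p.2 : ℕ)) hTne
  rw [hT, Finset.mem_product] at hpT
  refine ⟨p.1, hpT.1, p.2, hpT.2, ?_, ?_⟩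
  · intro z hz hzx
    by_contra hcon
    push_neg at hcon
    have hzw : z ≠ p.2 := hdisj z hz p.2 hpT.2
    have h1 := hmin (z, p.2) (by rw [hT, Finset.mem_product]; exact ⟨hz, hpT.2⟩)
    simp only at h1
    have hv1 : (z : ℕ) ≠ (p.1 : ℕ) := fun h => hzx (Fin.val_injective h)
    have hv2 : (z : ℕ) ≠ (p.2 : ℕ) := fun h => hzw (Fin.val_injective h)
    omega
  · intro z hz hzw
    by_contra hcon
    push_neg at hcon
    have hzx : p.1 ≠ z := hdisj p.1 hpT.1 z hz
    have h1 := hmin (p.1, z) (by rw [hT, Finset.mem_product]; exact ⟨hpT.1, hz⟩)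
    simp only at h1
    have hv1 : (z : ℕ) ≠ (p.1 : ℕ) := fun h => hzx (Fin.val_injective h).symm
    have hv2 : (z : ℕ) ≠ (p.2 : ℕ) := fun h => hzw (Fin.val_injective h)
    omega

/-- In an interchange of order `n` with a collection `F` of `t` flips, if distinct
lanes `a, b, c` are pairwise equivalent under `F`, then in the flipped graph at least
one of `a, b, c` is joined by a two-edge lane–ramp–lane path to at least
`(n - 2^(t+1) - 3)/3` other lanes. -/
theorem interchange_triple_to_many {V : Type*} (G : SimpleGraph V) (n : ℕ)
    (I : Interchange G n) (F : Finset (Set V)) (t : ℕ) (ht : F.card = t)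
    (a b c : Fin n) (hab : a ≠ b) (hac : a ≠ c) (hbc : b ≠ c)
    (e1 : EqvUnder F (I.lane a) (I.lane b)) (e2 : EqvUnder F (I.lane a) (I.lane c))
    (e3 : EqvUnder F (I.lane b) (I.lane c)) :
    ∃ x ∈ ({a, b, c} : Finset (Fin n)),
      ((n : ℝ) - 2 ^ (t + 1) - 3) / 3 ≤
        ({k : Fin n | k ≠ x ∧ ∃ (p q : Fin n) (hpq : p < q),
            (multiFlip G F).Adj (I.lane x) (I.ramp p q hpq) ∧
            (multiFlip G F).Adj (I.ramp p q hpq) (I.lane k)}.ncard : ℝ) := by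
  classical
  by_contra hcon
  push_neg at hcon
  set S : Fin n → Finset (Fin n) := fun x => Finset.univ.filter (fun k => k ≠ x ∧
      ∃ (p q : Fin n) (hpq : p < q),
        (multiFlip G F).Adj (I.lane x) (I.ramp p q hpq) ∧
        (multiFlip G F).Adj (I.ramp p q hpq) (I.lane k)) with hSdef
  have hcard_eq : ∀ x : Fin n, ({k : Fin n | k ≠ x ∧ ∃ (p q : Fin n) (hpq : p < q),
      (multiFlip G F).Adj (I.lane x) (I.ramp p q hpq) ∧
      (multiFlip G F).Adj (I.ramp p q hpq) (I.lane k)}.ncard) = (S x).card := by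
    intro x
    rw [← Set.ncard_coe_finset]
    congr 1
    ext k
    simp [hSdef]
  have hA : ((S a).card : ℝ) < ((n : ℝ) - 2 ^ (t + 1) - 3) / 3 := by
    have := hcon a (by simp)
    rwa [hcard_eq a] at this
  have hB' : ((S b).card : ℝ) < ((n : ℝ) - 2 ^ (t + 1) - 3) / 3 := by
    have := hcon b (by simp)
    rwa [hcard_eq b] at this
  have hC' : ((S c).card : ℝ) < ((n : ℝ) - 2 ^ (t + 1) - 3) / 3 := by
    have := hcon c (by simp)
    rwa [hcard_eq c] at this
  have hsumR : ((S a).card + (S b).card + (S c).card + 2 ^ (t + 1) + 3 : ℝ) < (n : ℝ) := by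
    linarith
  have hsum : (S a).card + (S b).card + (S c).card + 2 ^ (t + 1) + 3 < n := by
    exact_mod_cast hsumR
  set U : Finset (Fin n) := (({a, b, c} : Finset (Fin n)) ∪ S a ∪ S b) ∪ S c with hUdef
  have hU3 : ({a, b, c} : Finset (Fin n)).card ≤ 3 := by
    have h1 := Finset.card_insert_le a ({b, c} : Finset (Fin n))
    have h2 := Finset.card_insert_le b ({c} : Finset (Fin n))
    have h3 : ({c} : Finset (Fin n)).card = 1 := Finset.card_singleton c
    omega
  have hUcard : U.card ≤ 3 + ((S a).card + (S b).card + (S c).card) := by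
    rw [hUdef]
    have h1 := Finset.card_union_le ((({a, b, c} : Finset (Fin n)) ∪ S a) ∪ S b) (S c)
    have h2 := Finset.card_union_le (({a, b, c} : Finset (Fin n)) ∪ S a) (S b)
    have h3 := Finset.card_union_le ({a, b, c} : Finset (Fin n)) (S a)
    omega
  set B : Finset (Fin n) := Finset.univ \ U with hBdef
  have hBcard : 2 ^ t * 2 < B.card := by
    have h1 : B.card = n - U.card := by
      rw [hBdef, Finset.card_sdiff_of_subset (Finset.subset_univ U), Finset.card_univ, Fintype.card_fin]
    have h2 : 2 ^ (t + 1) = 2 ^ t * 2 := pow_succ 2 t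
    omega
  have hBcard' : F.powerset.card * 2 < B.card := by
    rwa [Finset.card_powerset, ht]
  have hmapsto : ∀ k ∈ B, (F.filter (fun A => I.lane k ∈ A)) ∈ F.powerset :=
    fun k _ => Finset.mem_powerset.mpr (Finset.filter_subset _ _)
  obtain ⟨s, _, hfib⟩ :=
    Finset.exists_lt_card_fiber_of_mul_lt_card_of_maps_to hmapsto hBcard'
  set C : Finset (Fin n) := B.filter (fun k => F.filter (fun A => I.lane k ∈ A) = s) with hCdef
  obtain ⟨k1, hk1⟩ := Finset.card_pos.mp (show 0 < C.card by omega)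
  obtain ⟨k2, hk2⟩ := Finset.card_pos.mp (show 0 < (C.erase k1).card by
    rw [Finset.card_erase_of_mem hk1]; omega)
  have hk2C : k2 ∈ C := Finset.mem_of_mem_erase hk2
  have hk21 : k2 ≠ k1 := Finset.ne_of_mem_erase hk2
  obtain ⟨k3, hk3⟩ := Finset.card_pos.mp (show 0 < ((C.erase k1).erase k2).card by
    rw [Finset.card_erase_of_mem hk2, Finset.card_erase_of_mem hk1]; omega)
  have hk32 : k3 ≠ k2 := Finset.ne_of_mem_erase hk3
  have hk31 : k3 ≠ k1 := Finset.ne_of_mem_erase (Finset.mem_of_mem_erase hk3)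
  have hk3C : k3 ∈ C := Finset.mem_of_mem_erase (Finset.mem_of_mem_erase hk3)
  have eqvK : ∀ u ∈ C, ∀ v ∈ C, EqvUnder F (I.lane u) (I.lane v) := by
    intro u hu v hv A hA
    have h1 := (Finset.mem_filter.mp hu).2
    have h2 := (Finset.mem_filter.mp hv).2
    constructor
    · intro hm
      have hh : A ∈ F.filter (fun A => I.lane u ∈ A) := Finset.mem_filter.mpr ⟨hA, hm⟩
      rw [h1, ← h2] at hh
      exact (Finset.mem_filter.mp hh).2
    · intro hm
      have hh : A ∈ F.filter (fun A => I.lane v ∈ A) := Finset.mem_filter.mpr ⟨hA, hm⟩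
      rw [h2, ← h1] at hh
      exact (Finset.mem_filter.mp hh).2
  have hKB : ∀ w ∈ ({k1, k2, k3} : Finset (Fin n)), w ∈ B := by
    intro w hw
    simp only [Finset.mem_insert, Finset.mem_singleton] at hw
    rcases hw with rfl | rfl | rfl
    exacts [(Finset.mem_filter.mp hk1).1, (Finset.mem_filter.mp hk2C).1,
      (Finset.mem_filter.mp hk3C).1]
  have hBfacts : ∀ k ∈ B, k ∉ ({a, b, c} : Finset (Fin n)) ∧ k ∉ S a ∧ k ∉ S b ∧ k ∉ S c := by
    intro k hk
    rw [hBdef, Finset.mem_sdiff] at hk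
    have h2 := hk.2
    rw [hUdef] at h2
    simp only [Finset.mem_union, not_or] at h2
    exact ⟨h2.1.1.1, h2.1.1.2, h2.1.2, h2.2⟩
  have notP : ∀ x ∈ ({a, b, c} : Finset (Fin n)), ∀ k ∈ B,
      ¬ ∃ (p q : Fin n) (hpq : p < q),
        (multiFlip G F).Adj (I.lane x) (I.ramp p q hpq) ∧
        (multiFlip G F).Adj (I.ramp p q hpq) (I.lane k) := by
    intro x hx k hk hpath
    obtain ⟨hnotabc, hSa, hSb, hSc⟩ := hBfacts k hk
    have hkx : k ≠ x := fun h => hnotabc (h ▸ hx)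
    have hkS : k ∈ S x := by
      rw [hSdef]
      exact Finset.mem_filter.mpr ⟨Finset.mem_univ _, hkx, hpath⟩
    simp only [Finset.mem_insert, Finset.mem_singleton] at hx
    rcases hx with rfl | rfl | rfl
    exacts [hSa hkS, hSb hkS, hSc hkS]
  have pickS : ∀ x ∈ ({a, b, c} : Finset (Fin n)), ∃ y ∈ ({a, b, c} : Finset (Fin n)),
      y ≠ x ∧ EqvUnder F (I.lane x) (I.lane y) := by
    intro x hx
    simp only [Finset.mem_insert, Finset.mem_singleton] at hx
    rcases hx with rfl | rfl | rfl
    · exact ⟨b, by simp, hab.symm, e1⟩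
    · exact ⟨a, by simp, hab, fun A hA => (e1 A hA).symm⟩
    · exact ⟨a, by simp, hac, fun A hA => (e2 A hA).symm⟩
  have pickK : ∀ w ∈ ({k1, k2, k3} : Finset (Fin n)), ∃ w' ∈ ({k1, k2, k3} : Finset (Fin n)),
      w' ≠ w ∧ EqvUnder F (I.lane w) (I.lane w') := by
    intro w hw
    simp only [Finset.mem_insert, Finset.mem_singleton] at hw
    rcases hw with rfl | rfl | rfl
    · exact ⟨k2, by simp, hk21, eqvK _ hk1 _ hk2C⟩
    · exact ⟨k1, by simp, hk21.symm, eqvK _ hk2C _ hk1⟩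
    · exact ⟨k1, by simp, hk31.symm, eqvK _ hk3C _ hk1⟩
  have hdisj : ∀ z ∈ ({a, b, c} : Finset (Fin n)), ∀ z' ∈ ({k1, k2, k3} : Finset (Fin n)),
      z ≠ z' := by
    intro z hz z' hz'
    exact fun h => (hBfacts z' (hKB z' hz')).1 (h ▸ hz)
  obtain ⟨x, hx, w, hw, houtS, houtK⟩ := exists_close_pair a b c k1 k2 k3 hdisj
  obtain ⟨y, hy, hyx, hexy⟩ := pickS x hx
  obtain ⟨w', hw', hw'w, hekw⟩ := pickK w hw
  have hxw : x ≠ w := hdisj x hx w hw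
  have hyout := houtS y hy hyx
  have hw'out := houtK w' hw' hw'w
  rcases hxw.lt_or_gt with h | h
  · have hv : (x : ℕ) < (w : ℕ) := h
    have hyo : y < x ∨ w < y := by
      rcases hyout with h' | h'
      · exact Or.inl (Fin.lt_def.mpr (by omega))
      · exact Or.inr (Fin.lt_def.mpr (by omega))
    have hw'o : w' < x ∨ w < w' := by
      rcases hw'out with h' | h'
      · exact Or.inl (Fin.lt_def.mpr (by omega))
      · exact Or.inr (Fin.lt_def.mpr (by omega))
    obtain ⟨z, w0, hz01, hw01, p, q, hpq, had1, had2⟩ :=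
      key_path G I F x y w w' hexy hekw h hyo hw'o
    have hzabc : z ∈ ({a, b, c} : Finset (Fin n)) := by
      rcases hz01 with rfl | rfl
      exacts [hx, hy]
    have hw0K : w0 ∈ ({k1, k2, k3} : Finset (Fin n)) := by
      rcases hw01 with rfl | rfl
      exacts [hw, hw']
    exact notP z hzabc w0 (hKB w0 hw0K) ⟨p, q, hpq, had1, had2⟩
  · have hv : (w : ℕ) < (x : ℕ) := h
    have hw'o : w' < w ∨ x < w' := by
      rcases hw'out with h' | h'
      · exact Or.inl (Fin.lt_def.mpr (by omega))
      · exact Or.inr (Fin.lt_def.mpr (by omega))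
    have hyo : y < w ∨ x < y := by
      rcases hyout with h' | h'
      · exact Or.inl (Fin.lt_def.mpr (by omega))
      · exact Or.inr (Fin.lt_def.mpr (by omega))
    obtain ⟨z, w0, hz01, hw01, p, q, hpq, had1, had2⟩ :=
      key_path G I F w w' x y hekw hexy h hw'o hyo
    have hzK : z ∈ ({k1, k2, k3} : Finset (Fin n)) := by
      rcases hz01 with rfl | rfl
      exacts [hw, hw']
    have hw0abc : w0 ∈ ({a, b, c} : Finset (Fin n)) := by
      rcases hw01 with rfl | rfl
      exacts [hx, hy]
    exact notP w0 hw0abc z (hKB z hzK) ⟨p, q, hpq, had2.symm, had1.symm⟩
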